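/- arXiv:math/0507512 — 3 statements merged into one kernel-verified Lean document; each statement's English description precedes it below -/
import Mathlib

section
/- Let V be a vector space over a field F, let A₁,…,A_k, B₁,…,B_k be linear endomorphisms of V, and let v₁,…,v_k ∈ V. Suppose (1) A_i B_i A_i = A_i for all i; (2) the A_i commute pairwise; (3) A_i(v_j) = A_j(v_i) for all i, j; (4) A_i B_i (v_i) = v_i for all i; (5) A_i B_j = B_j A_i whenever i ≠ j. Then there exists v ∈ V such that A_i(v) = v_i for all i = 1,…,k. -/
/-- Simultaneous preimage lemma for generalized invertible commuting endomorphisms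
(Lemma 2.1.3 of the paper). -/
theorem stmt0 (F V : Type*) [Field F] [AddCommGroup V] [Module F V]
    (k : ℕ) (A B : Fin k → Module.End F V) (v : Fin k → V)
    (h1 : ∀ i, A i * B i * A i = A i)
    (h2 : ∀ i j, A i * A j = A j * A i)
    (h3 : ∀ i j, A i (v j) = A j (v i))
    (h4 : ∀ i, A i (B i (v i)) = v i)
    (h5 : ∀ i j, i ≠ j → A i * B j = B j * A i) :
    ∃ w : V, ∀ i, A i w = v i := by
  induction k with
  | zero => exact ⟨0, fun i => i.elim0⟩
  | succ k ih =>
    obtain ⟨w, hw⟩ := ih (fun i => A i.castSucc) (fun i => B i.castSucc)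
      (fun i => v i.castSucc) (fun i => h1 _) (fun i j => h2 _ _) (fun i j => h3 _ _)
      (fun i => h4 _)
      (fun i j hij => h5 _ _ (fun h => hij (Fin.castSucc_injective _ h)))
    set L := Fin.last k
    refine ⟨w + B L (v L - A L w), ?_⟩
    intro i
    induction i using Fin.lastCases with
    | last =>
      have e1 : A L (B L (A L w)) = A L w := DFunLike.congr_fun (h1 L) w
      show A L (w + B L (v L - A L w)) = v L
      simp only [map_add, map_sub, h4 L, e1]
      abel
    | cast i =>
      have hz : A i.castSucc (v L - A L w) = 0 := by
        have e2 : A i.castSucc (A L w) = A L (A i.castSucc w) :=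
          DFunLike.congr_fun (h2 i.castSucc L) w
        rw [map_sub, h3, e2, hw i, sub_self]
      have hc : A i.castSucc (B L (v L - A L w)) = B L (A i.castSucc (v L - A L w)) :=
        DFunLike.congr_fun (h5 i.castSucc L (Fin.castSucc_lt_last i).ne) _
      rw [map_add, hc, hz, map_zero, add_zero, hw i]
end

section
/- Let V be a vector space over a field F and let A₁,…,A_k ∈ End_F(V) be pairwise commuting idempotent endomorphisms (A_i² = A_i). If v₁,…,v_k ∈ V satisfy A_i(v_j) = A_j(v_i) for all i,j and A_i(v_i) = v_i for each i, then there exists v ∈ V with A_i(v) = v_i for all i. -/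
/-- Simultaneous preimage lemma for pairwise commuting idempotent endomorphisms
(special case of Lemma 2.1.3 with `B i = id`). -/
theorem stmt1 (F V : Type*) [Field F] [AddCommGroup V] [Module F V]
    (k : ℕ) (A : Fin k → Module.End F V) (v : Fin k → V)
    (hidem : ∀ i, A i * A i = A i)
    (hcomm : ∀ i j, A i * A j = A j * A i)
    (hsym : ∀ i j, A i (v j) = A j (v i))
    (hfix : ∀ i, A i (v i) = v i) :
    ∃ w : V, ∀ i, A i w = v i := by
  induction k with
  | zero => exact ⟨0, fun i => i.elim0⟩
  | succ n ih =>
    obtain ⟨w', hw'⟩ := ih (fun i => A i.castSucc) (fun i => v i.castSucc)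
      (fun i => hidem _) (fun i j => hcomm _ _) (fun i j => hsym _ _) (fun i => hfix _)
    set L := Fin.last n
    refine ⟨w' + v L - A L w', ?_⟩
    intro i
    have mul_ap : ∀ (P Q : Module.End F V) (x : V), P (Q x) = (P * Q) x := fun _ _ _ => rfl
    induction i using Fin.lastCases with
    | last =>
      change A L (w' + v L - A L w') = v L
      simp only [map_add, map_sub, mul_ap (A L) (A L), hidem, hfix]
      abel
    | cast j =>
      have h1 : A j.castSucc w' = v j.castSucc := hw' j
      simp only [map_add, map_sub, h1, hsym j.castSucc L,
        mul_ap (A j.castSucc) (A L), hcomm j.castSucc L, ← mul_ap (A L) (A j.castSucc), h1]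
      abel
end

section
/- Let Λ(n) be the exterior algebra over a field F with the operators Γ_k (k = 1,…,n) defined by Γ_k(x^u) = δ_{k∈u} x^u on monomials. Given distinct indices q₁,…,q_r ∈ {1,…,n} and elements f₁,…,f_r ∈ Λ(n) satisfying Γ_{q_i}(f_j) = Γ_{q_j}(f_i) for all i,j and Γ_{q_i}(f_i) = f_i for all i, there exists f ∈ Λ(n) such that Γ_{q_i}(f) = f_i for all i. -/
/-- Simultaneous preimage result for the operators Γ_k = x_k ∂/∂x_k on the
exterior algebra Λ(n) (Corollary 2.1.5 of the paper): given distinct indices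
q₁,…,q_r and f₁,…,f_r with Γ_{q_i}(f_j) = Γ_{q_j}(f_i) and Γ_{q_i}(f_i) = f_i,
there is f with Γ_{q_i}(f) = f_i for all i. -/
theorem stmt3 (F V : Type*) [Field F] [AddCommGroup V] [Module F V]
    (n : ℕ) (b : Module.Basis (Finset (Fin n)) F V)
    (Γ : Fin n → Module.End F V)
    (hΓ : ∀ (k : Fin n) (u : Finset (Fin n)), Γ k (b u) = if k ∈ u then b u else 0)
    (r : ℕ) (q : Fin r → Fin n) (hq : Function.Injective q)
    (f : Fin r → V)
    (hsym : ∀ i j, Γ (q i) (f j) = Γ (q j) (f i))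
    (hfix : ∀ i, Γ (q i) (f i) = f i) :
    ∃ g : V, ∀ i, Γ (q i) g = f i := by
  classical
  -- coefficient formula for Γ k
  have coeff : ∀ (k : Fin n) (x : V) (u : Finset (Fin n)),
      b.repr (Γ k x) u = if k ∈ u then b.repr x u else 0 := by
    intro k x u
    set L1 : V →ₗ[F] F :=
      (Finsupp.lapply u).comp ((b.repr : V →ₗ[F] _).comp (Γ k)) with hL1
    set L2 : V →ₗ[F] F :=
      if k ∈ u then (Finsupp.lapply u).comp (b.repr : V →ₗ[F] _) else 0 with hL2
    have hL : L1 = L2 := by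
      apply Module.Basis.ext b
      intro v
      rcases eq_or_ne v u with rfl | hvu
      · by_cases hkv : k ∈ v <;>
          simp [hL1, hL2, hΓ, hkv]
      · by_cases hkv : k ∈ v <;> by_cases hku : k ∈ u <;>
          simp [hL1, hL2, hΓ, hkv, hku, Finsupp.single_apply, hvu]
    have := congrArg (fun L : V →ₗ[F] F => L x) hL
    simp only [hL1, hL2, LinearMap.comp_apply, Finsupp.lapply_apply,
      LinearEquiv.coe_coe] at this
    rw [this]
    split_ifs <;> simp
  -- coefficient of f i vanishes outside monomials containing q i
  have hvan : ∀ i u, q i ∉ u → b.repr (f i) u = 0 := by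
    intro i u hu
    have := coeff (q i) (f i) u
    rw [hfix i, if_neg hu] at this
    exact this
  -- definition of the target coefficients
  set d : Finset (Fin n) → F := fun u =>
    if h : ∃ i, q i ∈ u then b.repr (f h.choose) u else 0 with hd
  have key : ∀ i u, q i ∈ u → d u = b.repr (f i) u := by
    intro i u hiu
    have h : ∃ j, q j ∈ u := ⟨i, hiu⟩
    have hj : q h.choose ∈ u := h.choose_spec
    have e := congrArg (fun x => b.repr x u) (hsym h.choose i)
    rw [coeff, coeff, if_pos hj, if_pos hiu] at e
    -- e : b.repr (f i) u = b.repr (f h.choose) u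
    simp only [hd, dif_pos h]
    exact e.symm
  set T : Finset (Finset (Fin n)) :=
    Finset.univ.biUnion (fun i : Fin r => (b.repr (f i)).support) with hT
  refine ⟨∑ u ∈ T, d u • b u, fun i => ?_⟩
  have hsupp : (b.repr (f i)).support ⊆ T := by
    intro u hu
    simp only [hT, Finset.mem_biUnion]
    exact ⟨i, Finset.mem_univ i, hu⟩
  have hf : ∑ u ∈ T, b.repr (f i) u • b u = f i := by
    have h0 := b.linearCombination_repr (f i)
    rw [Finsupp.linearCombination_apply, Finsupp.sum] at h0
    calc ∑ u ∈ T, b.repr (f i) u • b u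
        = ∑ u ∈ (b.repr (f i)).support, b.repr (f i) u • b u :=
          (Finset.sum_subset hsupp fun u _ hu => by
            rw [Finsupp.notMem_support_iff.mp hu, zero_smul]).symm
      _ = f i := h0
  rw [map_sum, ← hf]
  apply Finset.sum_congr rfl
  intro u _
  rw [map_smul, hΓ]
  by_cases hiu : q i ∈ u
  · rw [if_pos hiu, key i u hiu]
  · rw [if_neg hiu, smul_zero, hvan i u hiu, zero_smul]
end
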